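/- In the category LRF of labeled rooted forests, every morphism (C₁, C₂, f) : F₁ → F₂ (where C_i is an admissible cut of F_i and f : R_{C₁}(F₁) ≅ P_{C₂}(F₂) is an isomorphism) has a kernel, given by the inclusion (C_null, C₁, id) : P_{C₁}(F₁) → F₁. -/

import Mathlib

attribute [local instance] Classical.propDecidable

noncomputable section

/-- A labeled rooted forest: a finite set of vertex labels together with a
parent function (`none` = root), acyclic via a depth function. -/
structure Forest where
  verts : Finset ℕ
  parent : ℕ → Option ℕ
  parent_mem : ∀ v ∈ verts, ∀ p, parent v = some p → p ∈ verts
  wf : ∃ d : ℕ → ℕ, ∀ v ∈ verts, ∀ p, parent v = some p → d p < d v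

namespace Forest

/-- `S` is the vertex set of a subforest of `F` (the branches `P_C(F)` severed by an
admissible cut `C`): a subset of the vertices closed under passing to children. -/
def IsSub (F : Forest) (S : Finset ℕ) : Prop :=
  S ⊆ F.verts ∧ ∀ v ∈ S, ∀ w ∈ F.verts, F.parent w = some v → w ∈ S

/-- The subforest `P_C(F)` determined by the (descendant-closed) vertex set `S`. -/
def restrict (F : Forest) (S : Finset ℕ) : Forest where
  verts := S ∩ F.verts
  parent v := (F.parent v).bind fun p =>
    if v ∈ S ∩ F.verts ∧ p ∈ S ∩ F.verts then some p else none
  parent_mem := by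
    intro v hv p hp
    beta_reduce at hp
    cases h : F.parent v with
    | none => rw [h] at hp; simp at hp
    | some q =>
      rw [h] at hp
      simp only [Option.bind_some] at hp
      split at hp
      · rename_i hc; cases hp; exact hc.2
      · simp at hp
  wf := by
    obtain ⟨d, hd⟩ := F.wf
    refine ⟨d, ?_⟩
    intro v hv p hp
    beta_reduce at hp
    cases h : F.parent v with
    | none => rw [h] at hp; simp at hp
    | some q =>
      rw [h] at hp
      simp only [Option.bind_some] at hp
      split at hp
      · rename_i hc; cases hp
        exact hd v (Finset.mem_inter.mp hv).2 _ h
      · simp at hp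

/-- The root part `R_C(F) = F/P_C(F)` determined by the severed vertex set `S`. -/
def quot (F : Forest) (S : Finset ℕ) : Forest where
  verts := F.verts \ S
  parent v := (F.parent v).bind fun p =>
    if v ∈ F.verts \ S ∧ p ∈ F.verts \ S then some p else none
  parent_mem := by
    intro v hv p hp
    beta_reduce at hp
    cases h : F.parent v with
    | none => rw [h] at hp; simp at hp
    | some q =>
      rw [h] at hp
      simp only [Option.bind_some] at hp
      split at hp
      · rename_i hc; cases hp; exact hc.2
      · simp at hp
  wf := by
    obtain ⟨d, hd⟩ := F.wf
    refine ⟨d, ?_⟩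
    intro v hv p hp
    beta_reduce at hp
    cases h : F.parent v with
    | none => rw [h] at hp; simp at hp
    | some q =>
      rw [h] at hp
      simp only [Option.bind_some] at hp
      split at hp
      · rename_i hc; cases hp
        exact hd v (Finset.mem_sdiff.mp hv).1 _ h
      · simp at hp

/-- `φ` realizes an isomorphism of labeled rooted forests (a root- and
incidence-preserving bijection on labels). -/
def IsoMap (F G : Forest) (φ : ℕ → ℕ) : Prop :=
  Set.BijOn φ (F.verts : Set ℕ) (G.verts : Set ℕ) ∧
    ∀ v ∈ F.verts, (F.parent v).map φ = G.parent (φ v)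

/-- Isomorphism of labeled rooted forests. -/
def Iso (F G : Forest) : Prop := ∃ φ, IsoMap F G φ

/-- A function on forests which only depends on the isomorphism class. -/
def Invariant (f : Forest → ℚ) : Prop := ∀ F G, Iso F G → f F = f G

/-- A function on forests supported on finitely many isomorphism classes. -/
def FinSupp (f : Forest → ℚ) : Prop :=
  ∃ s : Finset Forest, ∀ F, f F ≠ 0 → ∃ G ∈ s, Iso F G

/-- The Ringel-Hall convolution product:
`(f × g)(F) = ∑_{G ⊆ F} f(G) · g(F/G)`, the sum running over subforests of `F`. -/
def conv (f g : Forest → ℚ) : Forest → ℚ := fun F =>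
  ∑ S ∈ F.verts.powerset, if F.IsSub S then f (F.restrict S) * g (F.quot S) else 0

end Forest

end

namespace Forest

/-- A (raw) morphism datum in the category `LRF`: a triple `(C₁, C₂, f)`. -/
structure Mor where
  cut1 : Finset ℕ
  cut2 : Finset ℕ
  map : ℕ → ℕ

/-- `(C₁, C₂, f)` is a morphism `F → G` in `LRF`: `C₁` is an admissible cut of `F`
(recorded by the severed vertex set), `C₂` one of `G`, and `f` an isomorphism
`R_{C₁}(F) ≅ P_{C₂}(G)`. -/
def IsMor (F G : Forest) (m : Mor) : Prop :=
  F.IsSub m.cut1 ∧ G.IsSub m.cut2 ∧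
    IsoMap (F.quot m.cut1) (G.restrict m.cut2) m.map

/-- Composition of morphisms in `LRF` (`m : F → F₂` followed by `n : F₂ → F₃`):
the cut of `n` is pulled back through `m` to a cut `E₁ ≥ C₁` of `F`, and the new
image is the image of `R_{E₁}(F)` under the composite map. -/
noncomputable def Mor.comp (F : Forest) (m n : Mor) : Mor :=
  ⟨m.cut1 ∪ ((F.quot m.cut1).verts.filter fun v => m.map v ∈ n.cut1),
   ((F.quot (m.cut1 ∪ ((F.quot m.cut1).verts.filter fun v => m.map v ∈ n.cut1))).verts).image
     (n.map ∘ m.map),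
   n.map ∘ m.map⟩

/-- The identity morphism `(C_null, C_full, id)` of `F`. -/
def idMor (F : Forest) : Mor := ⟨∅, F.verts, id⟩

/-- Equality of morphisms out of `F` (the map only matters on `R_{C₁}(F)`). -/
def MorEq (F : Forest) (m n : Mor) : Prop :=
  m.cut1 = n.cut1 ∧ m.cut2 = n.cut2 ∧
    ∀ v ∈ (F.quot m.cut1).verts, m.map v = n.map v

/-- The zero morphisms `F → G`: morphisms with empty image (factoring through `∅`). -/
def IsZeroMor (F G : Forest) (m : Mor) : Prop := IsMor F G m ∧ m.cut2 = ∅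

end Forest

namespace Forest

theorem ext' {F G : Forest} (h1 : F.verts = G.verts) (h2 : F.parent = G.parent) : F = G := by
  cases F; cases G; cases h1; cases h2; rfl

theorem aux_restrict_verts (F : Forest) (S : Finset ℕ) :
    (F.restrict S).verts = S ∩ F.verts := rfl

theorem aux_quot_verts (F : Forest) (S : Finset ℕ) :
    (F.quot S).verts = F.verts \ S := rfl

theorem aux_restrict_parent (F : Forest) (S : Finset ℕ) (v : ℕ) :
    (F.restrict S).parent v = (F.parent v).bind fun p =>
      if v ∈ S ∩ F.verts ∧ p ∈ S ∩ F.verts then some p else none := rfl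

theorem aux_quot_parent (F : Forest) (S : Finset ℕ) (v : ℕ) :
    (F.quot S).parent v = (F.parent v).bind fun p =>
      if v ∈ F.verts \ S ∧ p ∈ F.verts \ S then some p else none := rfl

/-- `quot ∅` is isomorphic (via `id`) to the original forest. -/
theorem isoMap_quot_empty (G : Forest) : IsoMap (G.quot ∅) G id := by
  constructor
  · have h : (G.quot ∅).verts = G.verts := by
      rw [aux_quot_verts, Finset.sdiff_empty]
    rw [h]
    exact Set.bijOn_id _
  · intro v hv
    rw [aux_quot_verts, Finset.sdiff_empty] at hv
    rw [aux_quot_parent]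
    cases hp : G.parent v with
    | none => simp [hp]
    | some p =>
      have hpmem : p ∈ G.verts := G.parent_mem v hv p hp
      simp only [hp, Option.bind_some, Finset.sdiff_empty]
      rw [if_pos ⟨hv, hpmem⟩]
      simp [hp]

theorem restrict_restrict (F : Forest) {S T : Finset ℕ} (h : T ⊆ S) :
    (F.restrict S).restrict T = F.restrict T := by
  apply ext'
  · rw [aux_restrict_verts, aux_restrict_verts, aux_restrict_verts]
    ext x
    simp only [Finset.mem_inter]
    exact ⟨fun ⟨a, _, b⟩ => ⟨a, b⟩, fun ⟨a, b⟩ => ⟨a, h a, b⟩⟩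
  · funext v
    rw [aux_restrict_parent, aux_restrict_parent, aux_restrict_parent]
    cases hp : F.parent v with
    | none => rfl
    | some p =>
      simp only [Option.bind_some, aux_restrict_verts, Finset.mem_inter]
      by_cases h1 : (v ∈ S ∧ v ∈ F.verts) ∧ p ∈ S ∧ p ∈ F.verts
      · rw [if_pos h1, Option.bind_some]
        by_cases h2 : (v ∈ T ∧ v ∈ F.verts) ∧ p ∈ T ∧ p ∈ F.verts
        · rw [if_pos ⟨⟨h2.1.1, h1.1⟩, h2.2.1, h1.2⟩, if_pos h2]
        · rw [if_neg ?_, if_neg h2]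
          intro ⟨⟨a, b⟩, c, d⟩
          exact h2 ⟨⟨a, b.2⟩, c, d.2⟩
      · rw [if_neg h1, Option.bind_none, if_neg ?_]
        intro ⟨⟨a, b⟩, c, d⟩
        exact h1 ⟨⟨h a, b⟩, h c, d⟩

theorem IsoMap.image_verts {F G : Forest} {φ : ℕ → ℕ} (h : IsoMap F G φ) :
    F.verts.image φ = G.verts := by
  ext x
  simp only [Finset.mem_image]
  constructor
  · rintro ⟨v, hv, rfl⟩
    exact h.1.mapsTo hv
  · intro hx
    obtain ⟨v, hv, rfl⟩ := h.1.surjOn hx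
    exact ⟨v, hv, rfl⟩

end Forest

open Forest in
/-- In `LRF`, every morphism `(C₁, C₂, f) : F₁ → F₂` has a kernel,
namely the inclusion `(C_null, C₁, id) : P_{C₁}(F₁) → F₁`: its composite with the
morphism is zero, and every morphism into `F₁` killed by the morphism factors
uniquely through it. -/
theorem LRF_has_kernels (F1 F2 : Forest) (m : Mor) (hm : IsMor F1 F2 m) :
    IsMor (F1.restrict m.cut1) F1 (⟨∅, m.cut1, id⟩ : Mor) ∧
    IsZeroMor (F1.restrict m.cut1) F2
      (Mor.comp (F1.restrict m.cut1) (⟨∅, m.cut1, id⟩ : Mor) m) ∧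
    (∀ (A : Forest) (u : Mor), IsMor A F1 u → IsZeroMor A F2 (Mor.comp A u m) →
      ∃ w : Mor, IsMor A (F1.restrict m.cut1) w ∧
        MorEq A (Mor.comp A w (⟨∅, m.cut1, id⟩ : Mor)) u ∧
        ∀ w' : Mor, IsMor A (F1.restrict m.cut1) w' →
          MorEq A (Mor.comp A w' (⟨∅, m.cut1, id⟩ : Mor)) u → MorEq A w w') := by
  obtain ⟨hm1, hm2, hm3⟩ := hm
  set K := F1.restrict m.cut1 with hK
  have hKverts : K.verts = m.cut1 ∩ F1.verts := rfl
  have hKsub : K.verts ⊆ m.cut1 := by rw [hKverts]; exact Finset.inter_subset_left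
  -- a general helper: an IsoMap between empty forests
  have isoMap_empty : ∀ (F G : Forest) (φ : ℕ → ℕ), F.verts = ∅ → G.verts = ∅ →
      IsoMap F G φ := by
    intro F G φ hF hG
    constructor
    · rw [hF, hG]; simp
    · intro v hv; rw [hF] at hv; exact absurd hv (Finset.notMem_empty v)
  refine ⟨⟨⟨Finset.empty_subset _, fun v hv => absurd hv (Finset.notMem_empty v)⟩,
      hm1, isoMap_quot_empty K⟩, ?_, ?_⟩
  · -- the composite with the kernel inclusion is zero
    have hc1 : (∅ : Finset ℕ) ∪ ((K.quot ∅).verts.filter fun v => id v ∈ m.cut1)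
        = K.verts := by
      rw [Finset.empty_union, aux_quot_verts, Finset.sdiff_empty]
      apply Finset.filter_true_of_mem
      intro v hv
      exact hKsub hv
    have hquotK : (K.quot K.verts).verts = ∅ := by
      rw [aux_quot_verts, Finset.sdiff_self]
    simp only [IsZeroMor, Mor.comp, hc1, hquotK, Finset.image_empty]
    refine ⟨⟨⟨Finset.Subset.refl _, fun v _ w hw _ => hw⟩,
      ⟨Finset.empty_subset _, fun v hv => absurd hv (Finset.notMem_empty v)⟩, ?_⟩, trivial⟩
    exact isoMap_empty _ _ _ hquotK (by rw [aux_restrict_verts, Finset.empty_inter])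
  · -- universal property
    intro A u hu hz
    obtain ⟨hu1, hu2, hu3⟩ := hu
    -- every vertex of the root part of A is sent into m.cut1
    have key : ∀ v ∈ (A.quot u.cut1).verts, u.map v ∈ m.cut1 := by
      intro v hv
      have h2 := hz.2
      simp only [Mor.comp, Finset.image_eq_empty] at h2
      rw [aux_quot_verts, Finset.sdiff_eq_empty_iff_subset] at h2
      rw [aux_quot_verts, Finset.mem_sdiff] at hv
      have := h2 hv.1
      rw [Finset.mem_union] at this
      rcases this with h | h
      · exact absurd h hv.2
      · exact (Finset.mem_filter.mp h).2
    have hD2K : u.cut2 ⊆ K.verts := by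
      intro x hx
      have hxF : x ∈ (F1.restrict u.cut2).verts := by
        rw [aux_restrict_verts, Finset.mem_inter]
        exact ⟨hx, hu2.1 hx⟩
      obtain ⟨v, hv, rfl⟩ := hu3.1.surjOn hxF
      rw [hKverts, Finset.mem_inter]
      refine ⟨key v hv, ?_⟩
      have := hu3.1.mapsTo hv
      rw [aux_restrict_verts, Finset.mem_coe, Finset.mem_inter] at this
      exact this.2
    have hD2m : u.cut2 ⊆ m.cut1 := fun x hx => hKsub (hD2K hx)
    -- the factoring morphism is u itself, viewed as a morphism into K
    have hwmor : IsMor A K u := by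
      refine ⟨hu1, ⟨hD2K, ?_⟩, ?_⟩
      · intro v hv w hw hp
        rw [aux_restrict_parent] at hp
        cases hq : F1.parent w with
        | none => rw [hq] at hp; exact absurd hp (by simp)
        | some q =>
          rw [hq, Option.bind_some] at hp
          split at hp
          · rename_i hcond
            cases hp
            refine hu2.2 v hv w ?_ hq
            exact (Finset.mem_inter.mp hcond.1).2
          · exact absurd hp (by simp)
      · rw [hK, restrict_restrict F1 hD2m]
        exact hu3
    have hfilter : ∀ (S : Finset ℕ) (f : ℕ → ℕ),
        S ∪ ((A.quot S).verts.filter fun v => id (f v) ∈ (∅ : Finset ℕ)) = S := by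
      intro S f
      simp
    refine ⟨u, hwmor, ?_, ?_⟩
    · -- composite with kernel inclusion agrees with u
      have hc : u.cut1 ∪ ((A.quot u.cut1).verts.filter
          fun v => u.map v ∈ (∅ : Finset ℕ)) = u.cut1 := by simp
      simp only [MorEq, Mor.comp, hc]
      refine ⟨by trivial, ?_, by first | trivial | (intro v _; rfl)⟩
      have himg : (A.quot u.cut1).verts.image u.map = (F1.restrict u.cut2).verts :=
        IsoMap.image_verts hu3
      have : (A.quot u.cut1).verts.image (id ∘ u.map)
          = (A.quot u.cut1).verts.image u.map := rfl
      rw [this, himg, aux_restrict_verts, Finset.inter_eq_left.mpr hu2.1]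
    · -- uniqueness
      intro w' hw' heq
      have hc' : w'.cut1 ∪ ((A.quot w'.cut1).verts.filter
          fun v => w'.map v ∈ (∅ : Finset ℕ)) = w'.cut1 := by simp
      simp only [MorEq, Mor.comp, hc'] at heq
      obtain ⟨he1, he2, he3⟩ := heq
      have himg' : (A.quot w'.cut1).verts.image w'.map = w'.cut2 := by
        have h1 : (A.quot w'.cut1).verts.image w'.map = (K.restrict w'.cut2).verts :=
          IsoMap.image_verts hw'.2.2
        rw [h1, aux_restrict_verts, Finset.inter_eq_left.mpr hw'.2.1.1]
      have hcut2 : w'.cut2 = u.cut2 := by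
        rw [← he2, ← himg']
        rfl
      exact ⟨he1.symm, hcut2.symm, fun v hv => (he3 v (by rw [he1]; exact hv)).symm⟩
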